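/- Let ω : D(M) × D(M) → C^∞(M) be a nondegenerate alternating C^∞(M)-bilinear form on the module of differential operators of order ≤ 1 on a smooth manifold M (nondegenerate meaning φ ↦ i_φω is a module isomorphism onto the dual). Then there exists a unique H ∈ D(M) with i_H ω = -δ1, this H is a vector field (i.e. H(1) = 0), and (i_1 ω)(H) = 1. -/

import Mathlib

open LinearMap

set_option linter.unusedSectionVars false
set_option linter.unusedVariables false

section Prelim

variable (K A : Type*) [Field K] [CharZero K] [CommRing A] [Algebra K A]

/-- A differential operator of order at most 1 on `A`. -/
def IsDiff1 (φ : A →ₗ[K] A) : Prop :=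
  ∀ a b : A, φ (a * b) = a * φ b + b * φ a - a * b * φ 1

variable {K A}

/-- The commutator bracket of two endomorphisms. -/
def opBracket (φ ψ : A →ₗ[K] A) : A →ₗ[K] A := φ ∘ₗ ψ - ψ ∘ₗ φ

theorem isDiff1_mulLeft (f : A) : IsDiff1 K A (LinearMap.mulLeft K f) := by
  intro a b; simp only [LinearMap.mulLeft_apply, mul_one]; ring

theorem IsDiff1.opBracket {φ ψ : A →ₗ[K] A} (hφ : IsDiff1 K A φ) (hψ : IsDiff1 K A ψ) :
    IsDiff1 K A (_root_.opBracket φ ψ) := by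
  intro a b
  simp only [_root_.opBracket, LinearMap.sub_apply, LinearMap.comp_apply]
  rw [hψ a b, hφ a b]
  simp only [map_add, map_sub]
  rw [hφ a (ψ b), hφ b (ψ a), hφ (a * b) (ψ 1), hψ a (φ b), hψ b (φ a), hψ (a * b) (φ 1),
    hφ a b, hψ a b]
  ring

variable (K A) in
/-- The `A`-module `Diff_K(A)` of differential operators of order at most 1 on `A`. -/
def Diff1 : Submodule A (A →ₗ[K] A) where
  carrier := {φ | IsDiff1 K A φ}
  add_mem' := by
    intro φ ψ hφ hψ a b
    simp only [LinearMap.add_apply, hφ a b, hψ a b]; ring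
  zero_mem' := by intro a b; simp
  smul_mem' := by
    intro c φ hφ a b
    simp only [LinearMap.smul_apply, smul_eq_mul, hφ a b]; ring

/-- The commutator bracket on `Diff1`. -/
def Diff1.bk (φ ψ : Diff1 K A) : Diff1 K A :=
  ⟨opBracket φ.1 ψ.1, IsDiff1.opBracket φ.2 ψ.2⟩

variable (K) in
/-- The multiplication operator by `f`, as a differential operator of order `≤ 1`. -/
def Diff1.const (f : A) : Diff1 K A := ⟨LinearMap.mulLeft K f, isDiff1_mulLeft f⟩

/-- Evaluation at the unit: the linear form `δ1 : φ ↦ φ(1)` on `Diff1`. -/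
def ev1 : Diff1 K A →ₗ[A] A where
  toFun φ := φ.1 1
  map_add' φ ψ := rfl
  map_smul' c φ := rfl

end Prelim

section Mfd

open scoped Manifold

local notation "∞" => (⊤ : ℕ∞)

variable {EM : Type*} [NormedAddCommGroup EM] [NormedSpace ℝ EM]
  {HM : Type*} [TopologicalSpace HM] {I : ModelWithCorners ℝ EM HM}
  {M : Type*} [TopologicalSpace M] [ChartedSpace HM M] [IsManifold I (⊤ : ℕ∞) M]

theorem stmt7 (ω : Diff1 ℝ C^∞⟮I, M; ℝ⟯ →ₗ[C^∞⟮I, M; ℝ⟯] Diff1 ℝ C^∞⟮I, M; ℝ⟯ →ₗ[C^∞⟮I, M; ℝ⟯] C^∞⟮I, M; ℝ⟯)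
    (halt : ∀ φ : Diff1 ℝ C^∞⟮I, M; ℝ⟯, ω φ φ = 0) (hbij : Function.Bijective ω) :
    (∃! Hv : Diff1 ℝ C^∞⟮I, M; ℝ⟯, ω Hv = -ev1) ∧
      ∀ Hv : Diff1 ℝ C^∞⟮I, M; ℝ⟯, ω Hv = -ev1 → Hv.1 1 = 0 ∧ ω (Diff1.const ℝ (1 : C^∞⟮I, M; ℝ⟯)) Hv = 1 := by
  have antisymm : ∀ φ ψ : Diff1 ℝ C^∞⟮I, M; ℝ⟯, ω φ ψ = -ω ψ φ := by
    intro φ ψ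
    have h := halt (φ + ψ)
    simp only [map_add, LinearMap.add_apply, halt φ, halt ψ] at h
    linear_combination h
  constructor
  · obtain ⟨Hv, hHv⟩ := hbij.surjective (-ev1)
    exact ⟨Hv, hHv, fun y hy => hbij.injective (hy.trans hHv.symm)⟩
  · intro Hv hHv
    constructor
    · have h1 : ω Hv Hv = 0 := halt Hv
      rw [hHv] at h1
      simpa [ev1] using h1
    · rw [antisymm, hHv]
      simp only [LinearMap.neg_apply, neg_neg]
      show (Diff1.const ℝ (1 : C^∞⟮I, M; ℝ⟯)).1 1 = 1
      simp [Diff1.const]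
end Mfd
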